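/- Let 0 < ε < 1/9 and let p, q, q' ∈ ℝ² with q ≠ p and q' ≠ p. Suppose that the angle between q − p and q' − p is at most √ε/4, and that ‖p − q'‖ ≥ (1/3)·‖p − q‖. Then Â(p,q) ⊆ Ã(p,q'). -/

import Mathlib

/-- The segment `A(p,q)` of length `(√ε/16)·‖q-p‖` on the line `pq`, with one endpoint
at `p`, emanating away from `q`. -/
def Aseg (ε : ℝ) (p q : EuclideanSpace ℝ (Fin 2)) : Set (EuclideanSpace ℝ (Fin 2)) :=
  {x | ∃ t : ℝ, 0 ≤ t ∧ t ≤ Real.sqrt ε / 16 * ‖q - p‖ ∧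
    x = p - (t / ‖q - p‖) • (q - p)}

/-- `Â(p,q)`: the points within distance `(ε/64)·‖q-p‖` of `A(p,q)`. -/
def Ahat (ε : ℝ) (p q : EuclideanSpace ℝ (Fin 2)) : Set (EuclideanSpace ℝ (Fin 2)) :=
  {x | ∃ y ∈ Aseg ε p q, dist x y ≤ ε / 64 * ‖q - p‖}

/-- The segment `Ā(p,q)` of length `(√ε/2)·‖q-p‖` on the line `pq`, with one endpoint
at `p`, emanating away from `q`. -/
def Abar (ε : ℝ) (p q : EuclideanSpace ℝ (Fin 2)) : Set (EuclideanSpace ℝ (Fin 2)) :=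
  {x | ∃ t : ℝ, 0 ≤ t ∧ t ≤ Real.sqrt ε / 2 * ‖q - p‖ ∧
    x = p - (t / ‖q - p‖) • (q - p)}

/-- `Ã(p,q)`: the points within distance `(3ε/32)·‖q-p‖` of `Ā(p,q)`. -/
def Atilde (ε : ℝ) (p q : EuclideanSpace ℝ (Fin 2)) : Set (EuclideanSpace ℝ (Fin 2)) :=
  {x | ∃ y ∈ Abar ε p q, dist x y ≤ 3 * ε / 32 * ‖q - p‖}

/-- If the angle between `q - p` and `q' - p` is at most `√ε/4` and
`‖p - q'‖ ≥ (1/3)·‖p - q‖`, then `Â(p,q) ⊆ Ã(p,q')`. -/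
theorem Ahat_subset_Atilde (ε : ℝ) (hε0 : 0 < ε) (hε1 : ε < 1 / 9)
    (p q q' : EuclideanSpace ℝ (Fin 2)) (hq : q ≠ p) (hq' : q' ≠ p)
    (hangle : InnerProductGeometry.angle (q - p) (q' - p) ≤ Real.sqrt ε / 4)
    (hlen : (1 / 3) * ‖p - q‖ ≤ ‖p - q'‖) :
    Ahat ε p q ⊆ Atilde ε p q' := by
  have hnq : (0:ℝ) < ‖q - p‖ := norm_pos_iff.2 (sub_ne_zero.2 hq)
  have hnq' : (0:ℝ) < ‖q' - p‖ := norm_pos_iff.2 (sub_ne_zero.2 hq')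
  have hsε : 0 ≤ Real.sqrt ε := Real.sqrt_nonneg ε
  have hεsq : Real.sqrt ε * Real.sqrt ε = ε := Real.mul_self_sqrt hε0.le
  have hlen3 : ‖q - p‖ ≤ 3 * ‖q' - p‖ := by
    rw [norm_sub_rev q p, norm_sub_rev q' p]; linarith
  set θ := InnerProductGeometry.angle (q - p) (q' - p) with hθ
  have hθ0 : 0 ≤ θ := InnerProductGeometry.angle_nonneg _ _
  set u : EuclideanSpace ℝ (Fin 2) := ‖q - p‖⁻¹ • (q - p) with hu
  set u' : EuclideanSpace ℝ (Fin 2) := ‖q' - p‖⁻¹ • (q' - p) with hu'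
  have hnu : ‖u‖ = 1 := by
    rw [hu, norm_smul, norm_inv, norm_norm, inv_mul_cancel₀ hnq.ne']
  have hnu' : ‖u'‖ = 1 := by
    rw [hu', norm_smul, norm_inv, norm_norm, inv_mul_cancel₀ hnq'.ne']
  have hinner : (inner ℝ u u' : ℝ) = Real.cos θ := by
    rw [hθ, InnerProductGeometry.cos_angle, hu, hu', real_inner_smul_left,
      real_inner_smul_right]
    field_simp
  have hsq : ‖u - u'‖ ^ 2 = 2 - 2 * Real.cos θ := by
    rw [norm_sub_sq_real, hinner, hnu, hnu']; ring
  have hcos : 1 - θ ^ 2 / 2 ≤ Real.cos θ := Real.one_sub_sq_div_two_le_cos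
  have hbd : ‖u - u'‖ ≤ θ := by
    nlinarith [norm_nonneg (u - u'), sq_nonneg (‖u - u'‖ - θ)]
  clear_value u u' θ
  clear hθ hinner hsq hcos hnu hnu'
  rintro x ⟨y, ⟨t, ht0, ht1, rfl⟩, hxy⟩
  refine ⟨p - (t / ‖q' - p‖) • (q' - p), ⟨t, ht0, ?_, rfl⟩, ?_⟩
  · nlinarith
  · have hyy' : dist (p - (t / ‖q - p‖) • (q - p)) (p - (t / ‖q' - p‖) • (q' - p))
        = t * ‖u - u'‖ := by
      rw [dist_eq_norm]
      have : p - (t / ‖q - p‖) • (q - p) - (p - (t / ‖q' - p‖) • (q' - p))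
          = t • u' - t • u := by
        have e1 : (t / ‖q - p‖) • (q - p) = t • u := by
          rw [hu, smul_smul, div_eq_mul_inv]
        have e2 : (t / ‖q' - p‖) • (q' - p) = t • u' := by
          rw [hu', smul_smul, div_eq_mul_inv]
        rw [e1, e2]
        abel
      rw [this, ← smul_sub, norm_smul, Real.norm_eq_abs, abs_of_nonneg ht0,
        norm_sub_rev]
    have h1 : dist x (p - (t / ‖q' - p‖) • (q' - p))
        ≤ ε / 64 * ‖q - p‖ + t * ‖u - u'‖ := by
      calc dist x (p - (t / ‖q' - p‖) • (q' - p))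
          ≤ dist x (p - (t / ‖q - p‖) • (q - p))
            + dist (p - (t / ‖q - p‖) • (q - p)) (p - (t / ‖q' - p‖) • (q' - p)) :=
            dist_triangle _ _ _
        _ ≤ ε / 64 * ‖q - p‖ + t * ‖u - u'‖ := by rw [hyy']; exact add_le_add hxy le_rfl
    have h2 : t * ‖u - u'‖ ≤ ε / 64 * ‖q - p‖ := by
      have := mul_le_mul ht1 (hbd.trans hangle) (norm_nonneg _) (by positivity)
      nlinarith [norm_nonneg (u - u')]
    have h3 : ε / 32 * ‖q - p‖ ≤ 3 * ε / 32 * ‖q' - p‖ := by nlinarith [hlen3, hε0.le]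
    calc dist x (p - (t / ‖q' - p‖) • (q' - p)) ≤ ε / 64 * ‖q - p‖ + t * ‖u - u'‖ := h1
      _ ≤ ε / 32 * ‖q - p‖ := by linarith
      _ ≤ 3 * ε / 32 * ‖q' - p‖ := h3
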